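/- Let x : [0,∞) → ℝ be right-continuous with left limits (RCLL) and x(0) = 0. Define y(t) := sup_{0 ≤ s ≤ t} (−x(s)) and z(t) := x(t) + y(t). Then: (i) y is nondecreasing, right-continuous, and y(0) = 0; (ii) z(t) ≥ 0 for all t ≥ 0; (iii) ∫_{[0,∞)} z dμ_y = 0, where μ_y is the Lebesgue–Stieltjes measure associated with y. In particular, the pair (y, z) given by these formulas solves the Skorokhod problem for x: z = x + y ≥ 0, y is nondecreasing with y(0) = 0, and ∫_0^∞ z(t) dy(t) = 0. -/

import Mathlib

open Set Filter MeasureTheory Topology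

/-- An RCLL function on `[0,∞)` is bounded above on compact intervals. -/
lemma rcll_bddAbove (x : ℝ → ℝ)
    (hrc : ∀ t : ℝ, 0 ≤ t → ContinuousWithinAt x (Ici t) t)
    (hll : ∀ t : ℝ, 0 < t → ∃ l : ℝ, Tendsto x (nhdsWithin t (Iio t)) (nhds l))
    (T : ℝ) : BddAbove (x '' Icc 0 T) := by
  refine (isCompact_Icc (a := (0:ℝ)) (b := T)).induction_on
    (p := fun s => BddAbove (x '' s)) (by simp)
    (fun s t hst h => h.mono (image_mono hst))
    (fun s t hs ht => by show BddAbove (x '' (s ∪ t)); rw [image_union]; exact hs.union ht) ?_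
  intro t ht
  have h1 : {s : ℝ | x s ≤ x t + 1} ∈ 𝓝[Ici t] t := by
    have := hrc t ht.1 (Iio_mem_nhds (lt_add_one (x t)))
    exact mem_of_superset this fun s hs => le_of_lt (show x s < x t + 1 from hs)
  have hb1 : BddAbove (x '' {s : ℝ | x s ≤ x t + 1}) := by
    refine ⟨x t + 1, ?_⟩
    rintro _ ⟨s, hs, rfl⟩
    exact hs
  rcases eq_or_lt_of_le ht.1 with h0 | h0
  · refine ⟨{s : ℝ | x s ≤ x t + 1}, ?_, hb1⟩
    exact nhdsWithin_mono t (fun u hu => h0 ▸ hu.1) h1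
  · obtain ⟨l, hl⟩ := hll t h0
    have h2 : {s : ℝ | x s ≤ l + 1} ∈ 𝓝[Iio t] t := by
      have := hl (Iio_mem_nhds (lt_add_one l))
      exact mem_of_superset this fun s hs => le_of_lt (show x s < l + 1 from hs)
    have hb2 : BddAbove (x '' {s : ℝ | x s ≤ l + 1}) := by
      refine ⟨l + 1, ?_⟩
      rintro _ ⟨s, hs, rfl⟩
      exact hs
    refine ⟨{s : ℝ | x s ≤ l + 1} ∪ {s : ℝ | x s ≤ x t + 1}, ?_, ?_⟩
    · apply nhdsWithin_le_nhds
      have heq : 𝓝 t = 𝓝[Iio t ∪ Ici t] t := by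
        rw [Iio_union_Ici, nhdsWithin_univ]
      rw [heq, nhdsWithin_union]
      exact union_mem_sup h2 h1
    · show BddAbove (x '' _)
      rw [image_union]
      exact hb2.union hb1

/-- Skorokhod lemma (existence): for RCLL `x` on `[0,∞)` with `x(0) = 0`, the pair
`y(t) = sup_{0 ≤ s ≤ t} (−x(s))`, `z = x + y` solves the Skorokhod problem:
`y` is nondecreasing and right-continuous with `y(0) = 0`, `z ≥ 0` on `[0,∞)`, and
`∫_{[0,∞)} z dμ_y = 0` for the Lebesgue–Stieltjes measure `μ_y` of `y`. -/
theorem skorokhod_existence (x : ℝ → ℝ)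
    (hrc : ∀ t : ℝ, 0 ≤ t → ContinuousWithinAt x (Ici t) t)
    (hll : ∀ t : ℝ, 0 < t → ∃ l : ℝ, Tendsto x (nhdsWithin t (Iio t)) (nhds l))
    (hx0 : x 0 = 0)
    (y z : ℝ → ℝ)
    (hy : ∀ t : ℝ, y t = sSup ((fun s => - x s) '' Icc 0 (max t 0)))
    (hz : ∀ t : ℝ, z t = x t + y t) :
    Monotone y ∧
    (∀ t : ℝ, 0 ≤ t → ContinuousWithinAt y (Ici t) t) ∧
    y 0 = 0 ∧
    (∀ t : ℝ, 0 ≤ t → 0 ≤ z t) ∧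
    (∀ f : StieltjesFunction ℝ, (∀ t, f t = y t) →
      ∫⁻ t in Ici (0 : ℝ), ENNReal.ofReal (z t) ∂f.measure = 0) := by
  classical
  set g : ℝ → ℝ := fun s => - x s with hg
  have hrcg : ∀ t : ℝ, 0 ≤ t → ContinuousWithinAt g (Ici t) t :=
    fun t ht => (hrc t ht).neg
  have hllg : ∀ t : ℝ, 0 < t → ∃ l : ℝ, Tendsto g (nhdsWithin t (Iio t)) (nhds l) := by
    intro t ht
    obtain ⟨l, hl⟩ := hll t ht
    exact ⟨-l, hl.neg⟩
  have hbdd : ∀ T : ℝ, BddAbove (g '' Icc 0 T) := rcll_bddAbove g hrcg hllg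
  have hg0 : g 0 = 0 := by simp [hg, hx0]
  have hne : ∀ c : ℝ, 0 ≤ c → (g '' Icc 0 c).Nonempty :=
    fun c hc => ⟨g 0, mem_image_of_mem g ⟨le_rfl, hc⟩⟩
  -- monotonicity
  have hmono : Monotone y := by
    intro s t hst
    rw [hy s, hy t]
    exact csSup_le_csSup (hbdd _) (hne _ (le_max_right _ _))
      (image_mono (Icc_subset_Icc le_rfl (max_le_max hst le_rfl)))
  -- y 0 = 0
  have h00 : sSup (g '' Icc (0:ℝ) 0) = 0 := by
    rw [Icc_self, image_singleton, csSup_singleton, hg0]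
  have hy0 : y 0 = 0 := by
    rw [hy 0, max_self]
    exact h00
  -- y t = 0 for t ≤ 0
  have hyneg : ∀ t : ℝ, t ≤ 0 → y t = 0 := by
    intro t ht
    rw [hy t, max_eq_right ht]
    exact h00
  -- g t ≤ y t for t ≥ 0
  have hle : ∀ t : ℝ, 0 ≤ t → g t ≤ y t := by
    intro t ht
    rw [hy t]
    exact le_csSup (hbdd _) (mem_image_of_mem g ⟨ht, le_max_left _ _⟩)
  -- z ≥ 0
  have hznn : ∀ t : ℝ, 0 ≤ t → 0 ≤ z t := by
    intro t ht
    have := hle t ht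
    rw [hz t]
    simp only [hg] at this
    linarith
  -- key estimate for right continuity and constancy
  have hkey : ∀ t : ℝ, 0 ≤ t → ∀ ε : ℝ, 0 < ε → ∃ δ > 0,
      ∀ s, t ≤ s → s < t + δ → y s ≤ max (y t) (-x t + ε) := by
    intro t ht ε hε
    obtain ⟨δ, hδ, hδ'⟩ := Metric.continuousWithinAt_iff.mp (hrc t ht) ε hε
    refine ⟨δ, hδ, fun s hts hsδ => ?_⟩
    rw [hy s, max_eq_left (ht.trans hts)]
    apply csSup_le (hne s (ht.trans hts))
    rintro v ⟨u, ⟨hu0, hus⟩, rfl⟩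
    by_cases hut : u ≤ t
    · exact le_max_of_le_left ((hle u hu0).trans (hmono hut))
    · push_neg at hut
      have hd : dist u t < δ := by
        rw [Real.dist_eq, abs_of_nonneg (by linarith)]
        linarith
      have := hδ' (le_of_lt hut) hd
      rw [Real.dist_eq, abs_lt] at this
      have : g u ≤ -x t + ε := by simp only [hg]; linarith [this.1]
      exact le_max_of_le_right this
  -- right continuity
  have hrcy : ∀ t : ℝ, 0 ≤ t → ContinuousWithinAt y (Ici t) t := by
    intro t ht
    rw [Metric.continuousWithinAt_iff]
    intro ε hε
    obtain ⟨δ, hδ, hδ'⟩ := hkey t ht (ε/2) (by linarith)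
    refine ⟨δ, hδ, fun s hs hsd => ?_⟩
    have h1 : y t ≤ y s := hmono hs
    have h2 : y s ≤ y t + ε/2 := by
      have hsδ : s < t + δ := by
        rw [Real.dist_eq, abs_of_nonneg (by simp at hs; linarith)] at hsd
        linarith
      have := hδ' s hs hsδ
      have hgt : -x t + ε/2 ≤ y t + ε/2 := by
        have := hle t ht; simp only [hg] at this; linarith
      calc y s ≤ max (y t) (-x t + ε/2) := this
        _ ≤ y t + ε/2 := max_le (by linarith) hgt
    rw [Real.dist_eq, abs_of_nonneg (by linarith)]
    linarith
  -- constancy to the right where z > 0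
  have hconst : ∀ t : ℝ, 0 ≤ t → 0 < z t → ∃ r : ℚ, t < (r:ℝ) ∧ y r = y t := by
    intro t ht hzt
    rw [hz t] at hzt
    obtain ⟨δ, hδ, hδ'⟩ := hkey t ht (x t + y t) hzt
    obtain ⟨r, hr1, hr2⟩ := exists_rat_btwn (lt_add_of_pos_right t hδ)
    have hyr : y r ≤ y t := by
      have := hδ' r (le_of_lt hr1) hr2
      rwa [show -x t + (x t + y t) = y t by ring, max_self] at this
    exact ⟨r, hr1, le_antisymm hyr (hmono (le_of_lt hr1))⟩
  -- where z > 0, y has no left jump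
  have hleft : ∀ t : ℝ, 0 ≤ t → 0 < z t → Function.leftLim y t = y t := by
    intro t ht hzt
    rcases eq_or_lt_of_le ht with h0 | h0
    · -- t = 0 : y is 0 on Iio 0
      subst h0
      have htd : Tendsto y (𝓝[<] (0:ℝ)) (𝓝 (0:ℝ)) := by
        apply Tendsto.congr' _ tendsto_const_nhds
        exact eventuallyEq_of_mem self_mem_nhdsWithin
          (fun s hs => (hyneg s (le_of_lt hs)).symm)
      rw [leftLim_eq_of_tendsto htd, hy0]
    · set L : ℝ := sSup (g '' Ico 0 t) with hL
      have hbddL : BddAbove (g '' Ico 0 t) :=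
        (hbdd t).mono (image_mono (f := g) Ico_subset_Icc_self)
      have hneL : (g '' Ico 0 t).Nonempty := ⟨g 0, mem_image_of_mem g ⟨le_rfl, h0⟩⟩
      have claim1 : y t = max L (g t) := by
        rw [hy t, max_eq_left ht, ← Ico_union_right ht, image_union, image_singleton,
          csSup_union hbddL hneL (bddAbove_singleton) (singleton_nonempty _),
          csSup_singleton]
      have claim2 : Function.leftLim y t = sSup (y '' Iio t) :=
        hmono.leftLim_eq_sSup
      have claim3 : sSup (y '' Iio t) = L := by
        apply le_antisymm
        · apply csSup_le (by exact ⟨y 0, mem_image_of_mem y h0⟩)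
          rintro v ⟨s, hs, rfl⟩
          rcases le_or_gt s 0 with hs0 | hs0
          · rw [hyneg s hs0, ← hg0]
            exact le_csSup hbddL (mem_image_of_mem g ⟨le_rfl, h0⟩)
          · rw [hy s, max_eq_left (le_of_lt hs0)]
            exact csSup_le_csSup hbddL (hne s (le_of_lt hs0))
              (image_mono (f := g) (fun u hu => ⟨hu.1, lt_of_le_of_lt hu.2 hs⟩))
        · apply csSup_le hneL
          rintro v ⟨u, hu, rfl⟩
          have h1 : g u ≤ y u := hle u hu.1
          have h2 : y u ≤ sSup (y '' Iio t) := by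
            apply le_csSup
            · exact ⟨y t, by rintro _ ⟨s, hs, rfl⟩; exact hmono (le_of_lt hs)⟩
            · exact mem_image_of_mem y hu.2
          linarith
      rw [claim2, claim3]
      by_contra hne'
      have hLlt : L < y t := lt_of_le_of_ne (claim1 ▸ le_max_left _ _) hne'
      have : y t = g t := by
        rcases max_cases L (g t) with ⟨h1, _⟩ | ⟨h1, _⟩
        · rw [claim1, h1] at hLlt; exact absurd hLlt (lt_irrefl _)
        · rw [claim1, h1]
      rw [hz t] at hzt
      simp only [hg] at this
      linarith
  refine ⟨hmono, hrcy, hy0, hznn, ?_⟩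
  -- the integral condition
  intro f hf
  have hfy : ⇑f = y := funext hf
  set aq : ℚ → ℝ := fun q => sInf {u : ℝ | y u = y (q:ℝ)} with haq
  set S : ℚ → ℚ → Set ℝ :=
    fun p q => {s : ℝ | y (p:ℝ) = y (q:ℝ)} ∩ Ioc (p:ℝ) (q:ℝ) with hS
  set Tq : ℚ → Set ℝ :=
    fun q => {s : ℝ | Function.leftLim y s = y s ∧ s = aq q} with hT
  have hSmeas : ∀ p q : ℚ, MeasurableSet (S p q) :=
    fun p q => (MeasurableSet.const _).inter measurableSet_Ioc
  have hTmeas : ∀ q : ℚ, MeasurableSet (Tq q) := by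
    intro q
    apply Set.Subsingleton.measurableSet
    intro a ha b hb
    rw [ha.2, hb.2]
  have hSnull : ∀ p q : ℚ, f.measure (S p q) = 0 := by
    intro p q
    by_cases h : y (p:ℝ) = y (q:ℝ)
    · refine le_antisymm ?_ zero_le
      calc f.measure (S p q) ≤ f.measure (Ioc (p:ℝ) (q:ℝ)) :=
            measure_mono (inter_subset_right)
        _ = ENNReal.ofReal (f q - f p) := f.measure_Ioc _ _
        _ = 0 := by rw [hf, hf, h]; simp
    · have : S p q = ∅ := by
        rw [hS]; ext s; simp only [mem_inter_iff, mem_setOf_eq, mem_empty_iff_false,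
          iff_false, not_and]
        intro h'; exact absurd h' h
      rw [this, measure_empty]
  have hTnull : ∀ q : ℚ, f.measure (Tq q) = 0 := by
    intro q
    by_cases h : Function.leftLim y (aq q) = y (aq q)
    · refine le_antisymm ?_ zero_le
      calc f.measure (Tq q) ≤ f.measure {aq q} :=
            measure_mono (fun s hs => by rw [mem_singleton_iff]; exact hs.2)
        _ = ENNReal.ofReal (f (aq q) - Function.leftLim f (aq q)) :=
            f.measure_singleton _
        _ = 0 := by rw [hfy, h]; simp
    · have : Tq q = ∅ := by
        ext s; simp only [hT, mem_setOf_eq, mem_empty_iff_false, iff_false, not_and]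
        intro h1 h2; subst h2; exact h h1
      rw [this, measure_empty]
  set N : Set ℝ := (⋃ p : ℚ, ⋃ q : ℚ, S p q) ∪ ⋃ q : ℚ, Tq q with hN
  have hNmeas : MeasurableSet N :=
    ((MeasurableSet.iUnion fun p => MeasurableSet.iUnion fun q => hSmeas p q).union
      (MeasurableSet.iUnion fun q => hTmeas q))
  have hNnull : f.measure N = 0 := by
    apply measure_union_null
    · exact measure_iUnion_null fun p => measure_iUnion_null fun q => hSnull p q
    · exact measure_iUnion_null fun q => hTnull q
  have hUN : ∀ t : ℝ, 0 ≤ t → 0 < z t → t ∈ N := by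
    intro t ht hzt
    obtain ⟨r, hr1, hr2⟩ := hconst t ht hzt
    have hLL := hleft t ht hzt
    by_cases hp : ∃ p : ℚ, (p:ℝ) < t ∧ y (p:ℝ) = y t
    · obtain ⟨p, hp1, hp2⟩ := hp
      left
      exact mem_iUnion.2 ⟨p, mem_iUnion.2 ⟨r, show y (p:ℝ) = y (r:ℝ) from hp2.trans hr2.symm,
        hp1, le_of_lt hr1⟩⟩
    · push_neg at hp
      right
      refine mem_iUnion.2 ⟨r, hLL, ?_⟩
      -- t = aq r
      have hmem : t ∈ {u : ℝ | y u = y (r:ℝ)} := hr2.symm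
      have hlb : ∀ u ∈ {u : ℝ | y u = y (r:ℝ)}, t ≤ u := by
        intro u hu
        by_contra hut
        push_neg at hut
        obtain ⟨p, hp1, hp2⟩ := exists_rat_btwn hut
        have h1 : y u ≤ y (p:ℝ) := hmono (le_of_lt hp1)
        have h2 : y (p:ℝ) < y t :=
          lt_of_le_of_ne (hmono (le_of_lt hp2)) (hp p hp2)
        have hu' : y u = y t := (show y u = y (r:ℝ) from hu).trans hr2
        linarith
      have : aq r = t := (IsLeast.csInf_eq ⟨hmem, hlb⟩)
      exact this.symm
  -- conclude
  refine le_antisymm ?_ zero_le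
  have hsub : Ici (0:ℝ) ⊆ N ∪ (Ici (0:ℝ) \ N) := by
    intro t ht
    by_cases h : t ∈ N
    · exact Or.inl h
    · exact Or.inr ⟨ht, h⟩
  calc ∫⁻ t in Ici (0:ℝ), ENNReal.ofReal (z t) ∂f.measure
      ≤ ∫⁻ t in N ∪ (Ici (0:ℝ) \ N), ENNReal.ofReal (z t) ∂f.measure :=
        lintegral_mono_set hsub
    _ ≤ (∫⁻ t in N, ENNReal.ofReal (z t) ∂f.measure)
        + ∫⁻ t in Ici (0:ℝ) \ N, ENNReal.ofReal (z t) ∂f.measure :=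
        lintegral_union_le _ _ _
    _ = 0 := by
        rw [setLIntegral_measure_zero _ _ hNnull, zero_add]
        have hzero : ∀ᵐ t ∂f.measure, t ∈ Ici (0:ℝ) \ N →
            ENNReal.ofReal (z t) = (fun _ : ℝ => (0:ENNReal)) t := by
          refine ae_of_all _ (fun t ht => ?_)
          have h1 : ¬ (0 < z t) := fun h => ht.2 (hUN t ht.1 h)
          push_neg at h1
          simp [ENNReal.ofReal_eq_zero.2 h1]
        rw [setLIntegral_congr_fun_ae (measurableSet_Ici.diff hNmeas) hzero, lintegral_zero]
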